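/- The pyramidal width of the unit cube [0,1]^d in ℝ^d equals 1/√d. In particular, for any point x in the interior of the cube, any unit vector r ∈ ℝ^d, any vertex s of the cube maximizing ⟨r, s⟩, and any finite set S of vertices of the cube such that x is a proper convex combination of the elements of S, one has max_{v ∈ S} ⟨r, s − v⟩ ≥ 1/√d. -/

import Mathlib

open scoped InnerProductSpace

/-- The possible active sets for `x` within the atom set `V`: finite subsets `S ⊆ V` such
that `x` is a proper convex combination (all coefficients strictly positive) of `S`. -/
def activeSets {d : ℕ} (V : Set (EuclideanSpace ℝ (Fin d))) (x : EuclideanSpace ℝ (Fin d)) :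
    Set (Finset (EuclideanSpace ℝ (Fin d))) :=
  {S | ↑S ⊆ V ∧ ∃ α : EuclideanSpace ℝ (Fin d) → ℝ,
    (∀ v ∈ S, 0 < α v) ∧ (∑ v ∈ S, α v) = 1 ∧ x = ∑ v ∈ S, α v • v}

/-- The pyramidal directional width of the atom set `V` w.r.t. direction `r` and base
point `x`: `min` over active sets `S` for `x` of `max_{s ∈ V, v ∈ S} ⟨r/‖r‖, s - v⟩`. -/
noncomputable def PdirW {d : ℕ} (V : Set (EuclideanSpace ℝ (Fin d)))
    (r x : EuclideanSpace ℝ (Fin d)) : ℝ :=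
  sInf {w | ∃ S ∈ activeSets V x,
    w = sSup {t | ∃ s ∈ V, ∃ v ∈ (S : Set (EuclideanSpace ℝ (Fin d))),
      t = ⟪‖r‖⁻¹ • r, s - v⟫_ℝ}}

/-- The pyramidal width of a finite atom set `A`: the minimum of the pyramidal directional
width over all faces `K` of `conv(A)`, base points `x ∈ K` and nonzero feasible directions
`r ∈ cone(K - x)`. -/
noncomputable def PWidth {d : ℕ} (A : Finset (EuclideanSpace ℝ (Fin d))) : ℝ :=
  sInf {w | ∃ K : Set (EuclideanSpace ℝ (Fin d)),
    IsExposed ℝ (convexHull ℝ (↑A : Set (EuclideanSpace ℝ (Fin d)))) K ∧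
    ∃ x ∈ K, ∃ r : EuclideanSpace ℝ (Fin d), r ≠ 0 ∧
      (∃ c : ℝ, 0 ≤ c ∧ ∃ y ∈ K, r = c • (y - x)) ∧
      w = PdirW (K ∩ ↑A) r x}

open Classical in
/-- The vertex set `{0,1}^d` of the unit cube, as a finite set of points. -/
noncomputable def cubeVerts (d : ℕ) : Finset (EuclideanSpace ℝ (Fin d)) :=
  Finset.image
    (fun b : Fin d → Bool =>
      (WithLp.equiv 2 (Fin d → ℝ)).symm (fun i => if b i then 1 else 0))
    Finset.univ

section helpers
variable {d : ℕ}

lemma sum_coord {ι : Type*} (t : Finset ι) (g : ι → EuclideanSpace ℝ (Fin d)) (i : Fin d) :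
    (∑ a ∈ t, g a) i = ∑ a ∈ t, g a i := by
  classical
  induction t using Finset.induction with
  | empty => rfl
  | insert a s h ih => rw [Finset.sum_insert h, Finset.sum_insert h, ← ih]; rfl

lemma inner_coords (x y : EuclideanSpace ℝ (Fin d)) : ⟪x, y⟫_ℝ = ∑ i, x i * y i := by
  simp [PiLp.inner_apply, RCLike.inner_apply, conj_trivial]; exact Finset.sum_congr rfl fun _ _ => mul_comm _ _

lemma euclid_ext {x y : EuclideanSpace ℝ (Fin d)} (h : ∀ i, x i = y i) : x = y := PiLp.ext h

lemma mem_cubeVerts {a : EuclideanSpace ℝ (Fin d)} :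
    a ∈ cubeVerts d ↔ ∀ i, a i = 0 ∨ a i = 1 := by
  classical
  constructor
  · intro h i
    obtain ⟨b, _, rfl⟩ := Finset.mem_image.1 h
    by_cases hb : b i
    · right; simp [hb]
    · left; simp [hb]
  · intro h
    refine Finset.mem_image.2 ⟨fun i => decide (a i = 1), Finset.mem_univ _, ?_⟩
    apply euclid_ext
    intro i
    rcases h i with h0 | h1
    · simp [h0]
    · simp [h1]


lemma exists_big (r : EuclideanSpace ℝ (Fin d)) (hr : r ≠ 0) :
    ∃ i, r i ≠ 0 ∧ ‖r‖ ≤ Real.sqrt d * |r i| := by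
  have hne : ∃ i, r i ≠ 0 := by
    by_contra h
    push_neg at h
    exact hr (euclid_ext fun i => h i)
  obtain ⟨i₀, hi₀⟩ := hne
  obtain ⟨i, -, hi⟩ := Finset.exists_max_image Finset.univ (fun j => |r j|) ⟨i₀, Finset.mem_univ _⟩
  have hri : r i ≠ 0 := by
    intro h0
    have := hi i₀ (Finset.mem_univ _)
    rw [h0] at this
    simp at this
    exact hi₀ this
  refine ⟨i, hri, ?_⟩
  have hsum : ∑ j, (r j)^2 ≤ (d : ℝ) * (r i)^2 := by
    calc ∑ j, (r j)^2 ≤ ∑ _j : Fin d, (r i)^2 := by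
          refine Finset.sum_le_sum fun j _ => ?_
          have := hi j (Finset.mem_univ _)
          nlinarith [abs_nonneg (r j), abs_nonneg (r i), sq_abs (r j), sq_abs (r i)]
      _ = (d : ℝ) * (r i)^2 := by simp [Finset.sum_const, Finset.card_univ, nsmul_eq_mul]
  have hnorm : ‖r‖ = Real.sqrt (∑ j, (r j)^2) := by
    rw [EuclideanSpace.norm_eq]; simp [sq_abs]
  rw [hnorm]
  calc Real.sqrt (∑ j, (r j)^2) ≤ Real.sqrt ((d:ℝ) * (r i)^2) := Real.sqrt_le_sqrt hsum
    _ = Real.sqrt d * |r i| := by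
        rw [Real.sqrt_mul (by positivity), Real.sqrt_sq_eq_abs]

lemma exists_coord_zero {S : Finset (EuclideanSpace ℝ (Fin d))} {α : EuclideanSpace ℝ (Fin d) → ℝ}
    {x : EuclideanSpace ℝ (Fin d)} {i : Fin d}
    (hv : ∀ v ∈ S, ∀ j, v j = 0 ∨ v j = 1) (hpos : ∀ v ∈ S, 0 < α v)
    (hsum : ∑ v ∈ S, α v = 1) (hx : x = ∑ v ∈ S, α v • v) (hxi : x i < 1) :
    ∃ v ∈ S, v i = 0 := by
  by_contra h
  push_neg at h
  have h1 : ∀ v ∈ S, v i = 1 := fun v hv' => (hv v hv' i).resolve_left (h v hv')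
  have : x i = 1 := by
    rw [hx, sum_coord]
    rw [← hsum]
    refine Finset.sum_congr rfl fun v hv' => ?_
    have : (α v • v) i = α v * v i := rfl
    rw [this, h1 v hv', mul_one]
  linarith

lemma exists_coord_one {S : Finset (EuclideanSpace ℝ (Fin d))} {α : EuclideanSpace ℝ (Fin d) → ℝ}
    {x : EuclideanSpace ℝ (Fin d)} {i : Fin d}
    (hv : ∀ v ∈ S, ∀ j, v j = 0 ∨ v j = 1) (hpos : ∀ v ∈ S, 0 < α v)
    (hsum : ∑ v ∈ S, α v = 1) (hx : x = ∑ v ∈ S, α v • v) (hxi : 0 < x i) :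
    ∃ v ∈ S, v i = 1 := by
  by_contra h
  push_neg at h
  have h1 : ∀ v ∈ S, v i = 0 := fun v hv' => (hv v hv' i).resolve_right (h v hv')
  have : x i = 0 := by
    rw [hx, sum_coord]
    refine Finset.sum_eq_zero fun v hv' => ?_
    have : (α v • v) i = α v * v i := rfl
    rw [this, h1 v hv', mul_zero]
  linarith

lemma keyD {S : Finset (EuclideanSpace ℝ (Fin d))} {α : EuclideanSpace ℝ (Fin d) → ℝ}
    {x r s : EuclideanSpace ℝ (Fin d)}
    (hr : r ≠ 0)
    (hv : ∀ v ∈ S, ∀ j, v j = 0 ∨ v j = 1)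
    (hs1 : ∀ j, 0 < r j → s j = 1) (hs0 : ∀ j, r j < 0 → s j = 0)
    (hpos : ∀ v ∈ S, 0 < α v) (hsum : ∑ v ∈ S, α v = 1) (hx : x = ∑ v ∈ S, α v • v)
    (hx1 : ∀ i, 0 < r i → x i < 1) (hx0 : ∀ i, r i < 0 → 0 < x i) :
    ∃ v ∈ S, 1 / Real.sqrt d ≤ ⟪‖r‖⁻¹ • r, s - v⟫_ℝ := by
  obtain ⟨i, hri, hbig⟩ := exists_big r hr
  have hrpos : (0:ℝ) < ‖r‖ := norm_pos_iff.2 hr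
  have hdpos : (0:ℝ) < Real.sqrt d := by
    have : 0 < d := i.pos
    positivity
  -- get v
  have hv' : ∃ v ∈ S, r i * (s i - v i) = |r i| := by
    rcases lt_or_gt_of_ne hri with hneg | hposr
    · obtain ⟨v, hvS, hvi⟩ := exists_coord_one hv hpos hsum hx (hx0 i hneg)
      exact ⟨v, hvS, by rw [hs0 i hneg, hvi, abs_of_neg hneg]; ring⟩
    · obtain ⟨v, hvS, hvi⟩ := exists_coord_zero hv hpos hsum hx (hx1 i hposr)
      exact ⟨v, hvS, by rw [hs1 i hposr, hvi, abs_of_pos hposr]; ring⟩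
  obtain ⟨v, hvS, hterm⟩ := hv'
  refine ⟨v, hvS, ?_⟩
  have hterm_nonneg : ∀ j, 0 ≤ r j * (s j - v j) := by
    intro j
    rcases hv v hvS j with h0 | h1 <;>
    · rcases lt_trichotomy (r j) 0 with hj | hj | hj
      · rw [hs0 j hj]; first | (rw [h0]; simp) | (rw [h1]; nlinarith)
      · rw [hj]; ring_nf; simp
      · rw [hs1 j hj]; first | (rw [h0]; nlinarith) | (rw [h1]; simp)
  have hsum_ge : |r i| ≤ ∑ j, r j * (s j - v j) := by
    rw [← hterm]
    exact Finset.single_le_sum (fun j _ => hterm_nonneg j) (Finset.mem_univ i)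
  have habs : ‖r‖ / Real.sqrt d ≤ |r i| := by
    rw [div_le_iff₀ hdpos]; linarith [hbig]
  have hinner : ⟪‖r‖⁻¹ • r, s - v⟫_ℝ = ‖r‖⁻¹ * ∑ j, r j * (s j - v j) := by
    rw [real_inner_smul_left, inner_coords]; rfl
  rw [hinner]
  calc 1 / Real.sqrt d = ‖r‖⁻¹ * (‖r‖ / Real.sqrt d) := by field_simp
    _ ≤ ‖r‖⁻¹ * ∑ j, r j * (s j - v j) := by
        apply mul_le_mul_of_nonneg_left _ (by positivity)
        linarith

/-- flip argument: a vertex maximizing a linear functional with coefficients `c` has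
`s j = 1` where `c j > 0` and `s j = 0` where `c j < 0`. -/
lemma flip' (c : Fin d → ℝ) (s : EuclideanSpace ℝ (Fin d)) (hs : ∀ i, s i = 0 ∨ s i = 1)
    (hmax : ∀ w : EuclideanSpace ℝ (Fin d), (∀ i, w i = 0 ∨ w i = 1) →
      ∑ i, c i * w i ≤ ∑ i, c i * s i) (j : Fin d) :
    (0 < c j → s j = 1) ∧ (c j < 0 → s j = 0) := by
  classical
  constructor
  · intro hcj
    rcases hs j with h0 | h1
    · exfalso
      set w : EuclideanSpace ℝ (Fin d) :=
        (WithLp.equiv 2 (Fin d → ℝ)).symm (fun k => if k = j then 1 else s k) with hw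
      have happ : ∀ i, w i = if i = j then 1 else s i := fun i => rfl
      have hwv : ∀ i, w i = 0 ∨ w i = 1 := by
        intro i
        by_cases h : i = j
        · right; rw [happ i, if_pos h]
        · rw [happ i, if_neg h]; exact hs i
      have hd : ∑ i, (c i * w i - c i * s i) = c j := by
        rw [Finset.sum_eq_single j]
        · rw [happ j, if_pos rfl, h0]; ring
        · intro b _ hbj
          rw [happ b, if_neg hbj]; ring
        · intro h; exact absurd (Finset.mem_univ j) h
      rw [Finset.sum_sub_distrib] at hd
      have := hmax w hwv
      linarith
    · exact h1
  · intro hcj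
    rcases hs j with h0 | h1
    · exact h0
    · exfalso
      set w : EuclideanSpace ℝ (Fin d) :=
        (WithLp.equiv 2 (Fin d → ℝ)).symm (fun k => if k = j then 0 else s k) with hw
      have happ : ∀ i, w i = if i = j then 0 else s i := fun i => rfl
      have hwv : ∀ i, w i = 0 ∨ w i = 1 := by
        intro i
        by_cases h : i = j
        · left; rw [happ i, if_pos h]
        · rw [happ i, if_neg h]; exact hs i
      have hd : ∑ i, (c i * w i - c i * s i) = -c j := by
        rw [Finset.sum_eq_single j]
        · rw [happ j, if_pos rfl, h1]; ring
        · intro b _ hbj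
          rw [happ b, if_neg hbj]; ring
        · intro h; exact absurd (Finset.mem_univ j) h
      rw [Finset.sum_sub_distrib] at hd
      have := hmax w hwv
      linarith

/-- a continuous linear functional on Euclidean space in coordinates -/
lemma clm_apply_eq (f : EuclideanSpace ℝ (Fin d) →L[ℝ] ℝ) (z : EuclideanSpace ℝ (Fin d)) :
    f z = ∑ j, (f (EuclideanSpace.single j 1)) * z j := by
  have hz : z = ∑ j, z j • EuclideanSpace.single j (1:ℝ) := by
    apply euclid_ext
    intro i
    rw [sum_coord]
    rw [Finset.sum_eq_single i]
    · simp [EuclideanSpace.single_apply]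
    · intro b _ hbi
      have : (EuclideanSpace.single b (1:ℝ)) i = 0 := by
        simp [EuclideanSpace.single_apply, (Ne.symm hbi : ¬ i = b)]
      have h2 : (z b • EuclideanSpace.single b (1:ℝ)) i = z b * (EuclideanSpace.single b (1:ℝ)) i := rfl
      rw [h2, this, mul_zero]
    · intro h; exact absurd (Finset.mem_univ i) h
  conv_lhs => rw [hz]
  rw [map_sum]
  refine Finset.sum_congr rfl fun j _ => ?_
  rw [map_smul, smul_eq_mul, mul_comm]

lemma coordBound {z : EuclideanSpace ℝ (Fin d)}
    (hz : z ∈ convexHull ℝ (↑(cubeVerts d) : Set (EuclideanSpace ℝ (Fin d)))) (i : Fin d) :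
    0 ≤ z i ∧ z i ≤ 1 := by
  have hlin : IsLinearMap ℝ (fun w : EuclideanSpace ℝ (Fin d) => w i) :=
    ⟨fun a b => rfl, fun c a => rfl⟩
  have hsub : convexHull ℝ (↑(cubeVerts d) : Set (EuclideanSpace ℝ (Fin d))) ⊆
      {w : EuclideanSpace ℝ (Fin d) | w i ∈ Set.Icc (0:ℝ) 1} := by
    apply convexHull_min
    · rintro a ha
      rcases mem_cubeVerts.1 ha i with h | h <;> simp [Set.mem_Icc, h]
    · exact (convex_Icc (0:ℝ) 1).is_linear_preimage hlin
  exact (hsub hz : z i ∈ Set.Icc (0:ℝ) 1)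

lemma repr_max (A : Finset (EuclideanSpace ℝ (Fin d))) (f : EuclideanSpace ℝ (Fin d) →L[ℝ] ℝ)
    (z : EuclideanSpace ℝ (Fin d))
    (hz : z ∈ convexHull ℝ (↑A : Set (EuclideanSpace ℝ (Fin d))))
    (hmax : ∀ u ∈ convexHull ℝ (↑A : Set (EuclideanSpace ℝ (Fin d))), f u ≤ f z) :
    ∃ S : Finset (EuclideanSpace ℝ (Fin d)), ∃ α : EuclideanSpace ℝ (Fin d) → ℝ,
      ↑S ⊆ (↑A : Set (EuclideanSpace ℝ (Fin d))) ∧ (∀ v ∈ S, 0 < α v) ∧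
      (∑ v ∈ S, α v) = 1 ∧ z = ∑ v ∈ S, α v • v ∧ ∀ v ∈ S, f v = f z := by
  classical
  obtain ⟨w, hw0, hw1, hwz⟩ := Finset.mem_convexHull'.1 hz
  have hAC : (↑A : Set (EuclideanSpace ℝ (Fin d))) ⊆ convexHull ℝ (↑A : Set _) :=
    subset_convexHull ℝ _
  have hfz : f z = ∑ a ∈ A, w a * f a := by
    rw [← hwz, map_sum]
    exact Finset.sum_congr rfl fun a _ => by rw [map_smul, smul_eq_mul]
  have hkey : ∀ a ∈ A, 0 < w a → f a = f z := by
    intro a₀ ha₀ hwa₀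
    by_contra hne
    have hlt : f a₀ < f z := lt_of_le_of_ne (hmax a₀ (hAC ha₀)) hne
    have hstrict : ∑ a ∈ A, w a * f a < ∑ a ∈ A, w a * f z := by
      refine Finset.sum_lt_sum (fun a ha => ?_) ⟨a₀, ha₀, ?_⟩
      · exact mul_le_mul_of_nonneg_left (hmax a (hAC ha)) (hw0 a ha)
      · exact (mul_lt_mul_iff_right₀ hwa₀).2 hlt
    rw [← Finset.sum_mul, hw1, one_mul] at hstrict
    rw [← hfz] at hstrict
    exact lt_irrefl _ hstrict
  refine ⟨A.filter (fun a => 0 < w a), w, ?_, ?_, ?_, ?_, ?_⟩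
  · intro v hv
    simp only [Finset.coe_filter, Set.mem_setOf_eq] at hv
    exact hv.1
  · intro v hv; exact (Finset.mem_filter.1 hv).2
  · rw [← hw1]
    exact Finset.sum_filter_of_ne fun a ha hne =>
      lt_of_le_of_ne (hw0 a ha) (Ne.symm hne)
  · rw [← hwz]
    exact (Finset.sum_filter_of_ne fun a ha hne => by
      by_contra hno
      push_neg at hno
      have : w a = 0 := le_antisymm hno (hw0 a ha)
      exact hne (by rw [this, zero_smul])).symm
  · intro v hv
    exact hkey v (Finset.mem_filter.1 hv).1 (Finset.mem_filter.1 hv).2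

lemma face_vertex_coord (f : EuclideanSpace ℝ (Fin d) →L[ℝ] ℝ)
    {a : EuclideanSpace ℝ (Fin d)} (ha : a ∈ cubeVerts d)
    (hmaxa : ∀ u ∈ convexHull ℝ (↑(cubeVerts d) : Set (EuclideanSpace ℝ (Fin d))), f u ≤ f a)
    (j : Fin d) :
    (0 < f (EuclideanSpace.single j 1) → a j = 1) ∧
    (f (EuclideanSpace.single j 1) < 0 → a j = 0) := by
  refine flip' (fun k => f (EuclideanSpace.single k 1)) a (mem_cubeVerts.1 ha) ?_ j
  intro w hw
  rw [← clm_apply_eq, ← clm_apply_eq]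
  exact hmaxa w (subset_convexHull ℝ _ (Finset.mem_coe.2 (mem_cubeVerts.2 hw)))

lemma face_coord (f : EuclideanSpace ℝ (Fin d) →L[ℝ] ℝ) {j : Fin d}
    (hj : f (EuclideanSpace.single j 1) ≠ 0) {z : EuclideanSpace ℝ (Fin d)}
    (hzC : z ∈ convexHull ℝ (↑(cubeVerts d) : Set (EuclideanSpace ℝ (Fin d))))
    (hzmax : ∀ u ∈ convexHull ℝ (↑(cubeVerts d) : Set (EuclideanSpace ℝ (Fin d))), f u ≤ f z) :
    z j = if 0 < f (EuclideanSpace.single j 1) then 1 else 0 := by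
  obtain ⟨S, α, hSA, hpos, hsum, hrep, hfv⟩ := repr_max (cubeVerts d) f z hzC hzmax
  have hvj : ∀ v ∈ S, v j = if 0 < f (EuclideanSpace.single j 1) then 1 else 0 := by
    intro v hvS
    have hvA : v ∈ cubeVerts d := hSA hvS
    have hvmax : ∀ u ∈ convexHull ℝ (↑(cubeVerts d) : Set (EuclideanSpace ℝ (Fin d))),
        f u ≤ f v := fun u hu => (hfv v hvS).symm ▸ hzmax u hu
    rcases lt_or_gt_of_ne hj with hneg | hpos'
    · rw [if_neg (not_lt.2 (le_of_lt hneg))]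
      exact (face_vertex_coord f hvA hvmax j).2 hneg
    · rw [if_pos hpos']
      exact (face_vertex_coord f hvA hvmax j).1 hpos'
  rw [hrep, sum_coord]
  have : ∀ v ∈ S, (α v • v) j = α v * (if 0 < f (EuclideanSpace.single j 1) then 1 else 0) := by
    intro v hvS
    have h1 : (α v • v) j = α v * v j := rfl
    rw [h1, hvj v hvS]
  rw [Finset.sum_congr rfl this]
  by_cases hcase : 0 < f (EuclideanSpace.single j 1)
  · simp only [if_pos hcase, mul_one]; exact hsum
  · simp only [if_neg hcase, mul_zero, Finset.sum_const_zero]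

lemma PdirW_elem_ge (K : Set (EuclideanSpace ℝ (Fin d)))
    (hK : IsExposed ℝ (convexHull ℝ (↑(cubeVerts d) : Set (EuclideanSpace ℝ (Fin d)))) K)
    (x : EuclideanSpace ℝ (Fin d)) (hx : x ∈ K)
    (r : EuclideanSpace ℝ (Fin d)) (hr : r ≠ 0) (c : ℝ) (hc : 0 ≤ c)
    (y : EuclideanSpace ℝ (Fin d)) (hy : y ∈ K) (hry : r = c • (y - x)) :
    (∀ w ∈ {w | ∃ S ∈ activeSets (K ∩ ↑(cubeVerts d)) x,
      w = sSup {t | ∃ s ∈ K ∩ (↑(cubeVerts d) : Set (EuclideanSpace ℝ (Fin d))),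
        ∃ v ∈ (S : Set (EuclideanSpace ℝ (Fin d))), t = ⟪‖r‖⁻¹ • r, s - v⟫_ℝ}},
      1 / Real.sqrt d ≤ w) ∧
    {w | ∃ S ∈ activeSets (K ∩ ↑(cubeVerts d)) x,
      w = sSup {t | ∃ s ∈ K ∩ (↑(cubeVerts d) : Set (EuclideanSpace ℝ (Fin d))),
        ∃ v ∈ (S : Set (EuclideanSpace ℝ (Fin d))), t = ⟪‖r‖⁻¹ • r, s - v⟫_ℝ}}.Nonempty := by
  classical
  obtain ⟨f, hKf⟩ := hK ⟨x, hx⟩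
  have hxm : x ∈ {z ∈ convexHull ℝ (↑(cubeVerts d) : Set (EuclideanSpace ℝ (Fin d))) |
      ∀ u ∈ convexHull ℝ (↑(cubeVerts d) : Set (EuclideanSpace ℝ (Fin d))), f u ≤ f z} :=
    hKf ▸ hx
  obtain ⟨hxC, hxmax⟩ := hxm
  have hym : y ∈ {z ∈ convexHull ℝ (↑(cubeVerts d) : Set (EuclideanSpace ℝ (Fin d))) |
      ∀ u ∈ convexHull ℝ (↑(cubeVerts d) : Set (EuclideanSpace ℝ (Fin d))), f u ≤ f z} :=
    hKf ▸ hy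
  obtain ⟨hyC, hymax⟩ := hym
  have hc0 : 0 < c := by
    rcases lt_or_eq_of_le hc with h | h
    · exact h
    · exfalso; apply hr; rw [hry, ← h, zero_smul]
  have hrc : ∀ i, r i = c * (y i - x i) := fun i => by rw [hry]; rfl
  have hx1 : ∀ i, 0 < r i → x i < 1 := by
    intro i hi
    have h2 := (coordBound hyC i).2
    have := hrc i
    nlinarith
  have hx0 : ∀ i, r i < 0 → 0 < x i := by
    intro i hi
    have h2 := (coordBound hyC i).1
    have := hrc i
    nlinarith
  have hrf : ∀ j, r j ≠ 0 → f (EuclideanSpace.single j 1) = 0 := by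
    intro j hrj
    by_contra hfj
    have h1 := face_coord f hfj hxC hxmax
    have h2 := face_coord f hfj hyC hymax
    apply hrj
    rw [hrc j, h1, h2]; ring
  constructor
  case right =>
    obtain ⟨S, α, hSA, hpos, hsum, hrep, hfv⟩ := repr_max (cubeVerts d) f x hxC hxmax
    have hSK : ↑S ⊆ K ∩ (↑(cubeVerts d) : Set (EuclideanSpace ℝ (Fin d))) := by
      intro v hv
      refine ⟨?_, hSA hv⟩
      rw [hKf]
      exact ⟨subset_convexHull ℝ _ (hSA hv), fun u hu => (hfv v hv).symm ▸ hxmax u hu⟩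
    exact ⟨_, ⟨S, ⟨hSK, α, hpos, hsum, hrep⟩, rfl⟩⟩
  case left =>
    rintro w ⟨S, ⟨hSV, α, hpos, hsum, hrep⟩, rfl⟩
    have hSne : S.Nonempty := by
      rcases S.eq_empty_or_nonempty with h | h
      · rw [h] at hsum; simp at hsum
      · exact h
    obtain ⟨a₀, ha₀⟩ := hSne
    have ha₀KA : a₀ ∈ K ∩ (↑(cubeVerts d) : Set (EuclideanSpace ℝ (Fin d))) :=
      hSV (Finset.mem_coe.2 ha₀)
    have ha₀A : a₀ ∈ cubeVerts d := Finset.mem_coe.1 ha₀KA.2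
    have ha₀m : a₀ ∈ {z ∈ convexHull ℝ (↑(cubeVerts d) : Set (EuclideanSpace ℝ (Fin d))) |
        ∀ u ∈ convexHull ℝ (↑(cubeVerts d) : Set (EuclideanSpace ℝ (Fin d))), f u ≤ f z} :=
      hKf ▸ ha₀KA.1
    set st : EuclideanSpace ℝ (Fin d) := (WithLp.equiv 2 (Fin d → ℝ)).symm
      (fun k => if r k = 0 then a₀ k else if 0 < r k then 1 else 0) with hst
    have stapp : ∀ k, st k = if r k = 0 then a₀ k else if 0 < r k then 1 else 0 := fun k => rfl
    have hstA : st ∈ cubeVerts d := by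
      refine mem_cubeVerts.2 fun i => ?_
      rw [stapp i]
      split_ifs
      · exact mem_cubeVerts.1 ha₀A i
      · right; rfl
      · left; rfl
    have hstK : st ∈ K := by
      rw [hKf]
      refine ⟨subset_convexHull ℝ _ (Finset.mem_coe.2 hstA), ?_⟩
      have hfst : f st = f a₀ := by
        rw [clm_apply_eq, clm_apply_eq]
        refine Finset.sum_congr rfl fun k _ => ?_
        by_cases hk : r k = 0
        · rw [stapp k, if_pos hk]
        · rw [hrf k hk]; ring
      intro u hu
      rw [hfst]
      exact ha₀m.2 u hu
    have hSverts : ∀ v ∈ S, ∀ i, v i = 0 ∨ v i = 1 := fun v hv =>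
      mem_cubeVerts.1 (Finset.mem_coe.1 (hSV (Finset.mem_coe.2 hv)).2)
    have hs1 : ∀ k, 0 < r k → st k = 1 := fun k h => by
      rw [stapp k, if_neg (ne_of_gt h), if_pos h]
    have hs0 : ∀ k, r k < 0 → st k = 0 := fun k h => by
      rw [stapp k, if_neg (ne_of_lt h), if_neg (not_lt.2 (le_of_lt h))]
    obtain ⟨v, hvS, hval⟩ := keyD hr hSverts hs1 hs0 hpos hsum hrep hx1 hx0
    refine le_trans hval (le_csSup ?_ ?_)
    · have hfin : (K ∩ (↑(cubeVerts d) : Set (EuclideanSpace ℝ (Fin d)))).Finite :=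
        Set.Finite.subset (cubeVerts d).finite_toSet Set.inter_subset_right
      have heq : {t | ∃ s ∈ K ∩ (↑(cubeVerts d) : Set (EuclideanSpace ℝ (Fin d))),
          ∃ v' ∈ (S : Set (EuclideanSpace ℝ (Fin d))), t = ⟪‖r‖⁻¹ • r, s - v'⟫_ℝ} =
          Set.image2 (fun s v' => ⟪‖r‖⁻¹ • r, s - v'⟫_ℝ)
            (K ∩ (↑(cubeVerts d) : Set (EuclideanSpace ℝ (Fin d))))
            (S : Set (EuclideanSpace ℝ (Fin d))) := by
        ext t
        simp only [Set.mem_setOf_eq, Set.mem_image2]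
        constructor
        · rintro ⟨s, hs, v', hv', rfl⟩; exact ⟨s, hs, v', hv', rfl⟩
        · rintro ⟨s, hs, v', hv', rfl⟩; exact ⟨s, hs, v', hv', rfl⟩
      rw [heq]
      exact (Set.Finite.image2 _ hfin S.finite_toSet).bddAbove
    · exact ⟨st, ⟨hstK, Finset.mem_coe.2 hstA⟩, v, Finset.mem_coe.2 hvS, rfl⟩

lemma PdirW_ge (K : Set (EuclideanSpace ℝ (Fin d)))
    (hK : IsExposed ℝ (convexHull ℝ (↑(cubeVerts d) : Set (EuclideanSpace ℝ (Fin d)))) K)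
    (x : EuclideanSpace ℝ (Fin d)) (hx : x ∈ K)
    (r : EuclideanSpace ℝ (Fin d)) (hr : r ≠ 0) (c : ℝ) (hc : 0 ≤ c)
    (y : EuclideanSpace ℝ (Fin d)) (hy : y ∈ K) (hry : r = c • (y - x)) :
    1 / Real.sqrt d ≤ PdirW (K ∩ ↑(cubeVerts d)) r x := by
  obtain ⟨helem, hne⟩ := PdirW_elem_ge K hK x hx r hr c hc y hy hry
  exact le_csInf hne helem

/-- all ones vector -/
noncomputable def onesV (d : ℕ) : EuclideanSpace ℝ (Fin d) :=
  (WithLp.equiv 2 (Fin d → ℝ)).symm (fun _ => 1)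
/-- all ones except coordinate i -/
noncomputable def onesM {d : ℕ} (i : Fin d) : EuclideanSpace ℝ (Fin d) :=
  (WithLp.equiv 2 (Fin d → ℝ)).symm (fun j => if j = i then 0 else 1)
/-- the point ((d-1)/d, ..., (d-1)/d) -/
noncomputable def ctrV (d : ℕ) : EuclideanSpace ℝ (Fin d) :=
  (WithLp.equiv 2 (Fin d → ℝ)).symm (fun _ => ((d:ℝ) - 1) / d)

lemma onesV_mem : onesV d ∈ cubeVerts d := mem_cubeVerts.2 fun _ => Or.inr rfl
lemma onesM_mem (i : Fin d) : onesM i ∈ cubeVerts d := by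
  refine mem_cubeVerts.2 fun j => ?_
  by_cases h : j = i
  · left; show (if j = i then (0:ℝ) else 1) = 0; rw [if_pos h]
  · right; show (if j = i then (0:ℝ) else 1) = 1; rw [if_neg h]

lemma onesM_inj : Function.Injective (onesM (d := d)) := by
  intro i k h
  by_contra hik
  have h1 : onesM i i = 0 := by show (if i = i then (0:ℝ) else 1) = 0; rw [if_pos rfl]
  have h2 : onesM k i = 1 := by show (if i = k then (0:ℝ) else 1) = 1; rw [if_neg hik]
  rw [h] at h1; rw [h1] at h2; norm_num at h2

lemma sum_onesM (i : Fin d) : ∑ j, onesM i j = (d : ℝ) - 1 := by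
  have : ∀ j, onesM i j = 1 - (if j = i then (1:ℝ) else 0) := by
    intro j; show (if j = i then (0:ℝ) else 1) = _; split_ifs <;> ring
  rw [Finset.sum_congr rfl fun j _ => this j, Finset.sum_sub_distrib]
  rw [Finset.sum_ite_eq' Finset.univ i (fun _ => (1:ℝ))]
  simp [Finset.card_univ]

lemma ctr_rep (hd : 0 < d) :
    ctrV d = ∑ i, ((d:ℝ)⁻¹) • onesM i := by
  have hdne : (d:ℝ) ≠ 0 := Nat.cast_ne_zero.2 hd.ne'
  apply euclid_ext
  intro j
  rw [sum_coord]
  have : ∀ i : Fin d, ((d:ℝ)⁻¹ • onesM i) j = (d:ℝ)⁻¹ * onesM i j := fun _ => rfl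
  rw [Finset.sum_congr rfl fun i _ => this i, ← Finset.mul_sum]
  have hsum : ∑ i : Fin d, onesM i j = (d:ℝ) - 1 := by
    have h1 : ∀ i, onesM i j = 1 - (if i = j then (1:ℝ) else 0) := by
      intro i; show (if j = i then (0:ℝ) else 1) = _
      by_cases h : j = i
      · rw [if_pos h, if_pos h.symm]; ring
      · rw [if_neg h, if_neg (Ne.symm h)]; ring
    rw [Finset.sum_congr rfl fun i _ => h1 i, Finset.sum_sub_distrib,
      Finset.sum_ite_eq' Finset.univ j (fun _ => (1:ℝ))]
    simp [Finset.card_univ]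
  rw [hsum]
  show ((d:ℝ) - 1) / d = _
  field_simp

end helpers

/-- The pyramidal width of the unit cube `[0,1]^d` equals `1/√d`. In particular, for any
interior point `x` of the cube, unit direction `r`, vertex `s` maximizing `⟨r, ·⟩` over
vertices, and active vertex set `S` for `x`, one has `max_{v ∈ S} ⟨r, s - v⟩ ≥ 1/√d`. -/
theorem stmt6 (d : ℕ) (hd : 0 < d) :
    PWidth (cubeVerts d) = 1 / Real.sqrt d ∧
    ∀ (x r s : EuclideanSpace ℝ (Fin d)), (∀ i, 0 < x i ∧ x i < 1) → ‖r‖ = 1 →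
      (∀ i, s i = 0 ∨ s i = 1) →
      (∀ w : EuclideanSpace ℝ (Fin d), (∀ i, w i = 0 ∨ w i = 1) → ⟪r, w⟫_ℝ ≤ ⟪r, s⟫_ℝ) →
      ∀ S : Finset (EuclideanSpace ℝ (Fin d)), (∀ v ∈ S, ∀ i, v i = 0 ∨ v i = 1) →
      ∀ α : EuclideanSpace ℝ (Fin d) → ℝ, (∀ v ∈ S, 0 < α v) → (∑ v ∈ S, α v) = 1 →
      x = ∑ v ∈ S, α v • v →
      ∃ v ∈ S, 1 / Real.sqrt d ≤ ⟪r, s - v⟫_ℝ := by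
  classical
  have hdR : (0:ℝ) < d := Nat.cast_pos.2 hd
  have hdne : (d:ℝ) ≠ 0 := ne_of_gt hdR
  have hsq : (0:ℝ) < Real.sqrt d := Real.sqrt_pos.2 hdR
  constructor
  · -- PWidth = 1/√d
    set A := cubeVerts d with hA
    set C := convexHull ℝ (↑A : Set (EuclideanSpace ℝ (Fin d))) with hC
    have hAC : (↑A : Set (EuclideanSpace ℝ (Fin d))) ⊆ C := subset_convexHull ℝ _
    have hinter : C ∩ (↑A : Set (EuclideanSpace ℝ (Fin d))) = ↑A :=
      Set.inter_eq_self_of_subset_right hAC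
    set r₀ : EuclideanSpace ℝ (Fin d) := onesV d with hr₀
    set x₀ : EuclideanSpace ℝ (Fin d) := ctrV d with hx₀
    have hr₀ne : r₀ ≠ 0 := by
      intro h
      have h0 : r₀ ⟨0, hd⟩ = 1 := rfl
      rw [h] at h0
      have h1 : (0 : EuclideanSpace ℝ (Fin d)) ⟨0, hd⟩ = 0 := rfl
      rw [h1] at h0
      norm_num at h0
    have hexp : IsExposed ℝ C C := fun _ => ⟨0, by ext z; simp⟩
    set S₀ : Finset (EuclideanSpace ℝ (Fin d)) := Finset.image (onesM (d := d)) Finset.univ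
      with hS₀
    have hS₀A : ↑S₀ ⊆ (↑A : Set (EuclideanSpace ℝ (Fin d))) := by
      intro v hv
      obtain ⟨i, -, rfl⟩ := Finset.mem_image.1 (Finset.mem_coe.1 hv)
      exact Finset.mem_coe.2 (onesM_mem i)
    have hcard : S₀.card = d := by
      rw [hS₀, Finset.card_image_of_injective _ onesM_inj, Finset.card_univ, Fintype.card_fin]
    have hsumα : (∑ _v ∈ S₀, (d:ℝ)⁻¹) = 1 := by
      rw [Finset.sum_const, hcard, nsmul_eq_mul]
      field_simp
    have hrep : x₀ = ∑ v ∈ S₀, (d:ℝ)⁻¹ • v := by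
      rw [hS₀, Finset.sum_image (fun i _ k _ h => onesM_inj h)]
      exact ctr_rep hd
    have hactive : S₀ ∈ activeSets (↑A : Set (EuclideanSpace ℝ (Fin d))) x₀ :=
      ⟨hS₀A, fun _ => (d:ℝ)⁻¹, fun v _ => by positivity, hsumα, hrep⟩
    have hx₀C : x₀ ∈ C := by
      apply convexHull_mono hS₀A
      exact Finset.mem_convexHull'.2
        ⟨fun _ => (d:ℝ)⁻¹, fun v _ => by positivity, hsumα, hrep.symm⟩
    have hyC : onesV d ∈ C := hAC (Finset.mem_coe.2 onesV_mem)
    have hfeas : r₀ = (d:ℝ) • (onesV d - x₀) := by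
      apply euclid_ext
      intro i
      have h1 : r₀ i = 1 := rfl
      have h2 : ((d:ℝ) • (onesV d - x₀)) i = (d:ℝ) * (1 - ((d:ℝ) - 1)/d) := rfl
      rw [h1, h2]
      field_simp
      ring
    have hnorm : ‖r₀‖ = Real.sqrt d := by
      rw [EuclideanSpace.norm_eq]
      congr 1
      have h1 : ∀ i : Fin d, ‖r₀ i‖^2 = 1 := by
        intro i
        have : r₀ i = 1 := rfl
        rw [this]
        norm_num
      rw [Finset.sum_congr rfl fun i _ => h1 i]
      simp [Finset.card_univ]
    have hmem : PdirW (C ∩ (↑A : Set (EuclideanSpace ℝ (Fin d)))) r₀ x₀ ∈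
        {w | ∃ K : Set (EuclideanSpace ℝ (Fin d)),
          IsExposed ℝ (convexHull ℝ (↑A : Set (EuclideanSpace ℝ (Fin d)))) K ∧
          ∃ x ∈ K, ∃ r : EuclideanSpace ℝ (Fin d), r ≠ 0 ∧
            (∃ c : ℝ, 0 ≤ c ∧ ∃ y ∈ K, r = c • (y - x)) ∧
            w = PdirW (K ∩ ↑A) r x} :=
      ⟨C, hexp, x₀, hx₀C, r₀, hr₀ne,
        ⟨(d:ℝ), Nat.cast_nonneg d, onesV d, hyC, hfeas⟩, rfl⟩
    have lower : ∀ w ∈ {w | ∃ K : Set (EuclideanSpace ℝ (Fin d)),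
          IsExposed ℝ (convexHull ℝ (↑A : Set (EuclideanSpace ℝ (Fin d)))) K ∧
          ∃ x ∈ K, ∃ r : EuclideanSpace ℝ (Fin d), r ≠ 0 ∧
            (∃ c : ℝ, 0 ≤ c ∧ ∃ y ∈ K, r = c • (y - x)) ∧
            w = PdirW (K ∩ ↑A) r x}, 1 / Real.sqrt d ≤ w := by
      rintro w ⟨K, hK, x, hx, r, hrne, ⟨c, hc, y, hy, hry⟩, rfl⟩
      exact PdirW_ge K hK x hx r hrne c hc y hy hry
    have hupper : PdirW (C ∩ (↑A : Set (EuclideanSpace ℝ (Fin d)))) r₀ x₀ ≤ 1 / Real.sqrt d := by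
      obtain ⟨helem, -⟩ := PdirW_elem_ge C hexp x₀ hx₀C r₀ hr₀ne (d:ℝ)
        (Nat.cast_nonneg d) (onesV d) hyC hfeas
      rw [hinter]
      rw [hinter] at helem
      unfold PdirW
      have hbdd : BddBelow {w | ∃ S ∈ activeSets (↑A : Set (EuclideanSpace ℝ (Fin d))) x₀,
          w = sSup {t | ∃ s ∈ (↑A : Set (EuclideanSpace ℝ (Fin d))),
            ∃ v ∈ (S : Set (EuclideanSpace ℝ (Fin d))), t = ⟪‖r₀‖⁻¹ • r₀, s - v⟫_ℝ}} :=
        ⟨1 / Real.sqrt d, fun w hw => helem w hw⟩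
      refine le_trans (csInf_le hbdd ⟨S₀, hactive, rfl⟩) ?_
      -- sSup T ≤ 1/√d
      apply csSup_le
      · exact ⟨⟪‖r₀‖⁻¹ • r₀, onesV d - onesM ⟨0, hd⟩⟫_ℝ, onesV d,
          Finset.mem_coe.2 onesV_mem, onesM ⟨0, hd⟩,
          Finset.mem_coe.2 (Finset.mem_image.2 ⟨⟨0, hd⟩, Finset.mem_univ _, rfl⟩), rfl⟩
      · rintro t ⟨sv, hsv, v, hv, rfl⟩
        obtain ⟨i, -, rfl⟩ := Finset.mem_image.1 (Finset.mem_coe.1 hv)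
        have hsv1 : ∀ j, sv j ≤ 1 := by
          intro j
          rcases mem_cubeVerts.1 (Finset.mem_coe.1 hsv) j with h | h <;> rw [h] <;> norm_num
        have hcalc : ⟪‖r₀‖⁻¹ • r₀, sv - onesM i⟫_ℝ =
            ‖r₀‖⁻¹ * ∑ j, r₀ j * (sv j - onesM i j) := by
          rw [real_inner_smul_left, inner_coords]
          rfl
        rw [hcalc, hnorm]
        have hsum1 : ∑ j, r₀ j * (sv j - onesM i j) ≤ 1 := by
          have h1 : ∀ j, r₀ j * (sv j - onesM i j) = sv j - onesM i j := by
            intro j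
            have : r₀ j = 1 := rfl
            rw [this, one_mul]
          rw [Finset.sum_congr rfl fun j _ => h1 j, Finset.sum_sub_distrib, sum_onesM]
          have h2 : ∑ j, sv j ≤ ∑ _j : Fin d, (1:ℝ) :=
            Finset.sum_le_sum fun j _ => hsv1 j
          rw [Finset.sum_const, Finset.card_univ, Fintype.card_fin, nsmul_eq_mul, mul_one] at h2
          linarith
        calc (Real.sqrt d)⁻¹ * ∑ j, r₀ j * (sv j - onesM i j)
            ≤ (Real.sqrt d)⁻¹ * 1 := by
              apply mul_le_mul_of_nonneg_left hsum1 (by positivity)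
          _ = 1 / Real.sqrt d := by rw [mul_one, one_div]
    unfold PWidth
    refine le_antisymm (le_trans (csInf_le ⟨1 / Real.sqrt d, lower⟩ hmem) hupper)
      (le_csInf ⟨_, hmem⟩ lower)
  · -- pointwise statement
    intro x r s hint hr1 hs hmax S hS α hpos hsum hx
    have hr0 : r ≠ 0 := by
      intro h
      rw [h, norm_zero] at hr1
      norm_num at hr1
    have hflip : ∀ j, (0 < r j → s j = 1) ∧ (r j < 0 → s j = 0) := by
      intro j
      refine flip' (fun i => r i) s hs ?_ j
      intro w hw
      have h := hmax w hw
      rwa [inner_coords, inner_coords] at h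
    obtain ⟨v, hvS, hval⟩ := keyD hr0 hS (fun j => (hflip j).1) (fun j => (hflip j).2)
      hpos hsum hx (fun i _ => (hint i).2) (fun i _ => (hint i).1)
    refine ⟨v, hvS, ?_⟩
    rwa [hr1, inv_one, one_smul] at hval
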